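/- There is no Borel measurable function S : (ℕ → Bool) → ℝ such that for all f, g : ℕ → Bool, f E₀ g if and only if S f = S g. In other words, E₀ is not Borel reducible to the equality relation on ℝ (E₀ is not smooth). -/

import Mathlib

open MeasureTheory Set Function
open scoped ENNReal

/-- The equivalence relation `E₀` on Cantor space: eventual equality. -/
def E0 (f g : ℕ → Bool) : Prop := ∃ N : ℕ, ∀ n : ℕ, N ≤ n → f n = g n

namespace E0NotSmooth

noncomputable section

/-- binary digit map -/
def D (x : ℝ) : ℕ → Bool := fun i => decide (⌊x * 2 ^ (i + 1)⌋ % 2 = 1)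

/-- prefix cylinder -/
def cyl (n : ℕ) (s : ℕ → Bool) : Set (ℕ → Bool) := {f | ∀ i < n, f i = s i}

def kk : ℕ → (ℕ → Bool) → ℤ
  | 0, _ => 0
  | n + 1, s => 2 * kk n s + (bif s n then 1 else 0)

lemma kk_nonneg (n : ℕ) (s : ℕ → Bool) : 0 ≤ kk n s := by
  induction n with
  | zero => simp [kk]
  | succ n ih => cases h : s n <;> simp [kk, h] <;> omega

lemma kk_lt (n : ℕ) (s : ℕ → Bool) : kk n s < 2 ^ n := by
  induction n with
  | zero => simp [kk]
  | succ n ih => cases h : s n <;> simp [kk, h, pow_succ] <;> omega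

lemma measurable_D : Measurable D := by
  refine measurable_pi_lambda _ fun i => ?_
  have h1 : Measurable fun x : ℝ => ⌊x * 2 ^ (i + 1)⌋ :=
    Int.measurable_floor.comp (measurable_id.mul_const _)
  exact (measurable_from_top (f := fun m : ℤ => decide (m % 2 = 1))).comp h1

lemma measurableSet_cyl (n : ℕ) (s : ℕ → Bool) : MeasurableSet (cyl n s) := by
  have : cyl n s = ⋂ i ∈ Finset.range n, (fun f : ℕ → Bool => f i) ⁻¹' {s i} := by
    ext f; simp [cyl]
  rw [this]
  exact MeasurableSet.biInter (Finset.range n).countable_toSet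
    fun i _ => (measurable_pi_apply i) (measurableSet_singleton _)

lemma floor_key (n : ℕ) (s : ℕ → Bool) (x : ℝ) (hx : x ∈ Ico (0:ℝ) 1) :
    (∀ i < n, D x i = s i) ↔ ⌊x * 2 ^ n⌋ = kk n s := by
  induction n with
  | zero =>
      simp only [Nat.not_lt_zero, false_implies, implies_true, true_iff, kk]
      rw [pow_zero, mul_one]
      exact Int.floor_eq_zero_iff.2 (by exact hx)
  | succ n ih =>
      have h2n : (0:ℝ) < 2 ^ n := by positivity
      set q := ⌊x * 2 ^ n⌋ with hq
      have hm : ⌊x * 2 ^ (n+1)⌋ = 2 * q ∨ ⌊x * 2 ^ (n+1)⌋ = 2 * q + 1 := by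
        have hps : (2:ℝ) ^ (n+1) = 2 ^ n * 2 := pow_succ 2 n
        have h1 : (2 * q : ℤ) ≤ ⌊x * 2 ^ (n+1)⌋ := by
          rw [Int.le_floor, hps]
          push_cast
          have := Int.floor_le (x * 2 ^ n)
          nlinarith
        have h2 : ⌊x * 2 ^ (n+1)⌋ < 2 * q + 2 := by
          rw [Int.floor_lt, hps]
          push_cast
          have := Int.lt_floor_add_one (x * 2 ^ n)
          nlinarith
        omega
      constructor
      · intro h
        have hqk : q = kk n s := (ih.1 fun i hi => h i (by omega))
        have hd : D x n = s n := h n (by omega)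
        show ⌊x * 2 ^ (n+1)⌋ = 2 * kk n s + (bif s n then 1 else 0)
        cases hsn : s n <;> rw [hsn] at hd <;>
          simp only [D, decide_eq_false_iff_not, decide_eq_true_eq] at hd <;>
          simp only [cond_false, cond_true] <;> omega
      · intro h
        change ⌊x * 2 ^ (n+1)⌋ = 2 * kk n s + (bif s n then 1 else 0) at h
        have hqk : q = kk n s := by cases hsn : s n <;> rw [hsn] at h <;>
          simp only [cond_false, cond_true] at h <;> omega
        intro i hi
        rcases Nat.lt_or_ge i n with hin | hin
        · exact ih.2 hqk i hin
        · have hin' : i = n := by omega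
          subst hin'
          cases hsn : s i <;> rw [hsn] at h <;>
            simp only [cond_false, cond_true] at h <;>
            simp only [D, decide_eq_false_iff_not, decide_eq_true_eq] <;> omega

/-- The coin-flipping measure on Cantor space. -/
def mu : Measure (ℕ → Bool) := (volume.restrict (Ico (0:ℝ) 1)).map D

lemma preimage_cyl (n : ℕ) (s : ℕ → Bool) :
    D ⁻¹' (cyl n s) ∩ Ico (0:ℝ) 1
      = Ico ((kk n s : ℝ) / 2 ^ n) ((kk n s + 1) / 2 ^ n) := by
  have h2n : (0:ℝ) < 2 ^ n := by positivity
  ext x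
  simp only [mem_inter_iff, mem_preimage, mem_Ico, cyl, mem_setOf_eq]
  constructor
  · rintro ⟨h1, h2⟩
    have hf : ⌊x * 2 ^ n⌋ = kk n s := (floor_key n s x h2).1 h1
    have := (Int.floor_eq_iff).1 hf
    constructor
    · rw [div_le_iff₀ h2n]; exact this.1
    · rw [lt_div_iff₀ h2n]; push_cast; push_cast at this; linarith [this.2]
  · rintro ⟨h1, h2⟩
    have hk0 : (0:ℝ) ≤ (kk n s : ℝ) := by exact_mod_cast kk_nonneg n s
    have hk1 : ((kk n s : ℝ) + 1) ≤ 2 ^ n := by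
      have h := Int.lt_iff_add_one_le.1 (kk_lt n s)
      exact_mod_cast h
    have hx : x ∈ Ico (0:ℝ) 1 := by
      constructor
      · have : (0:ℝ) ≤ (kk n s : ℝ) / 2 ^ n := by positivity
        linarith
      · have : ((kk n s : ℝ) + 1) / 2 ^ n ≤ 1 := by
          rw [div_le_one h2n]; exact hk1
        linarith
    have hf : ⌊x * 2 ^ n⌋ = kk n s := by
      rw [Int.floor_eq_iff]
      constructor
      · rw [div_le_iff₀ h2n] at h1; exact h1
      · rw [lt_div_iff₀ h2n] at h2; push_cast; push_cast at h2; linarith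
    exact ⟨(floor_key n s x hx).2 hf, hx⟩

lemma mu_cyl (n : ℕ) (s : ℕ → Bool) : mu (cyl n s) = 2⁻¹ ^ n := by
  rw [mu, Measure.map_apply measurable_D (measurableSet_cyl n s),
    Measure.restrict_apply (measurable_D (measurableSet_cyl n s)),
    preimage_cyl, Real.volume_Ico]
  have h2n : (0:ℝ) < 2 ^ n := by positivity
  have : ((kk n s : ℝ) + 1) / 2 ^ n - (kk n s : ℝ) / 2 ^ n = (2 ^ n)⁻¹ := by
    field_simp
    ring
  rw [this, ← inv_pow, ENNReal.ofReal_pow (by norm_num : (0:ℝ) ≤ 2⁻¹)]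
  congr 1
  rw [ENNReal.ofReal_inv_of_pos (by norm_num : (0:ℝ) < 2)]
  norm_num

instance : IsProbabilityMeasure mu := by
  constructor
  have : (univ : Set (ℕ → Bool)) = cyl 0 (fun _ => false) := by
    ext f; simp [cyl]
  rw [this, mu_cyl]
  norm_num

/-- the collection of prefix cylinders -/
def Cyls : Set (Set (ℕ → Bool)) := {A | ∃ n s, A = cyl n s}

lemma cyl_inter {n m : ℕ} {s t : ℕ → Bool} (hnm : n ≤ m) (f : ℕ → Bool)
    (hfA : f ∈ cyl n s) (hfB : f ∈ cyl m t) : cyl n s ∩ cyl m t = cyl m t := by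
  ext g
  simp only [cyl, mem_inter_iff, mem_setOf_eq] at *
  constructor
  · rintro ⟨_, h2⟩; exact h2
  · intro hg
    refine ⟨fun i hi => ?_, hg⟩
    rw [hg i (lt_of_lt_of_le hi hnm), ← hfB i (lt_of_lt_of_le hi hnm), hfA i hi]

lemma isPiSystem_Cyls : IsPiSystem Cyls := by
  rintro A ⟨n, s, rfl⟩ B ⟨m, t, rfl⟩ ⟨f, hfA, hfB⟩
  rcases le_total n m with h | h
  · rw [cyl_inter h f hfA hfB]; exact ⟨m, t, rfl⟩
  · rw [inter_comm, cyl_inter h f hfB hfA]; exact ⟨n, s, rfl⟩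

lemma gen_Cyls : (inferInstance : MeasurableSpace (ℕ → Bool))
    = MeasurableSpace.generateFrom Cyls := by
  refine le_antisymm ?_ (MeasurableSpace.generateFrom_le ?_)
  · refine iSup_le fun i => measurable_iff_comap_le.mp ?_
    refine @measurable_to_countable' Bool (ℕ → Bool) _ _
      (MeasurableSpace.generateFrom Cyls) (fun f => f i) (fun b => ?_)
    have : ((fun f : ℕ → Bool => f i) ⁻¹' {b})
        = ⋃ (v : {v : Fin (i+1) → Bool // v ⟨i, Nat.lt_succ_self i⟩ = b}),
            cyl (i+1) (fun j => if h : j < i+1 then v.1 ⟨j, h⟩ else false) := by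
      ext f
      simp only [mem_preimage, mem_singleton_iff, mem_iUnion, cyl, mem_setOf_eq, id]
      constructor
      · intro hf
        refine ⟨⟨fun j => f j, hf⟩, fun j hj => ?_⟩
        simp [hj]
      · rintro ⟨⟨v, hv⟩, h⟩
        have := h i (Nat.lt_succ_self i)
        simpa [hv] using this
    rw [this]
    exact MeasurableSet.iUnion fun v =>
      MeasurableSpace.measurableSet_generateFrom ⟨i+1, _, rfl⟩
  · rintro A ⟨n, s, rfl⟩
    exact measurableSet_cyl n s

/-- flip the k-th coordinate -/
def flp (k : ℕ) (f : ℕ → Bool) : ℕ → Bool := fun j => if j = k then !f j else f j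

lemma measurable_flp (k : ℕ) : Measurable (flp k) := by
  refine measurable_pi_lambda _ fun j => ?_
  by_cases h : j = k
  · simp only [flp, h, if_pos rfl]
    exact (measurable_from_top (f := Bool.not)).comp (measurable_pi_apply k)
  · simp only [flp, if_neg h]
    exact measurable_pi_apply j

lemma flp_preimage_cyl (k n : ℕ) (s : ℕ → Bool) :
    flp k ⁻¹' cyl n s = cyl n (fun j => if j = k then !s j else s j) := by
  ext f
  simp only [mem_preimage, cyl, mem_setOf_eq, flp]
  constructor
  · intro h i hi
    have := h i hi
    by_cases hik : i = k
    · simp only [if_pos hik] at this ⊢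
      cases hfi : f i <;> rw [hfi] at this <;> simp [← this]
    · simpa [if_neg hik] using this
  · intro h i hi
    have := h i hi
    by_cases hik : i = k
    · simp only [if_pos hik] at this ⊢
      cases hsi : s i <;> rw [hsi] at this <;> simp [this]
    · simpa [if_neg hik] using this

lemma mu_map_flp (k : ℕ) : mu.map (flp k) = mu := by
  have hpm : IsProbabilityMeasure (mu.map (flp k)) :=
    Measure.isProbabilityMeasure_map (measurable_flp k).aemeasurable
  refine ext_of_generate_finite Cyls gen_Cyls isPiSystem_Cyls ?_ (by simp)
  rintro A ⟨n, s, rfl⟩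
  rw [Measure.map_apply (measurable_flp k) (measurableSet_cyl n s),
    flp_preimage_cyl, mu_cyl, mu_cyl]

lemma mu_inter_cyl (A : Set (ℕ → Bool)) (hA : MeasurableSet A)
    (hinv : ∀ k f, flp k f ∈ A ↔ f ∈ A) :
    ∀ (n : ℕ) (s : ℕ → Bool), mu (A ∩ cyl n s) = mu A * 2⁻¹ ^ n := by
  intro n
  induction n with
  | zero =>
      intro s
      have : cyl 0 s = univ := by ext f; simp [cyl]
      simp [this]
  | succ n ih =>
      intro s
      set s' : ℕ → Bool := fun j => if j = n then !s j else s j with hs'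
      have hagree : ∀ i < n, s' i = s i := fun i hi => if_neg (by omega)
      have hsplit : A ∩ cyl n s = (A ∩ cyl (n+1) s) ∪ (A ∩ cyl (n+1) s') := by
        ext f
        simp only [cyl, mem_inter_iff, mem_setOf_eq, mem_union]
        constructor
        · rintro ⟨hfA, hf⟩
          by_cases hfn : f n = s n
          · exact Or.inl ⟨hfA, fun i hi => by
              rcases Nat.lt_or_ge i n with h | h
              · exact hf i h
              · have : i = n := by omega
                rw [this]; exact hfn⟩
          · refine Or.inr ⟨hfA, fun i hi => ?_⟩
            rcases Nat.lt_or_ge i n with h | h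
            · rw [hagree i h]; exact hf i h
            · have hin : i = n := by omega
              subst hin
              simp only [hs', if_pos rfl]
              cases hsi : s i <;> rw [hsi] at hfn <;> simp at hfn ⊢ <;> simp [hfn]
        · rintro (⟨hfA, hf⟩ | ⟨hfA, hf⟩)
          · exact ⟨hfA, fun i hi => hf i (by omega)⟩
          · exact ⟨hfA, fun i hi => by rw [← hagree i hi]; exact hf i (by omega)⟩
      have hdisj : Disjoint (A ∩ cyl (n+1) s) (A ∩ cyl (n+1) s') := by
        rw [disjoint_iff_inter_eq_empty]
        ext f
        simp only [cyl, mem_inter_iff, mem_setOf_eq, mem_empty_iff_false, iff_false, not_and]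
        rintro ⟨_, hf⟩ _ hf'
        have h1 := hf n (by omega)
        have h2 := hf' n (by omega)
        rw [h1] at h2
        simp only [hs', if_pos rfl] at h2
        cases s n <;> simp at h2
      have hpre : flp n ⁻¹' (A ∩ cyl (n+1) s') = A ∩ cyl (n+1) s := by
        ext f
        simp only [mem_preimage, mem_inter_iff, hinv, cyl, mem_setOf_eq, flp]
        refine and_congr_right fun _ => ?_
        constructor
        · intro h i hi
          have := h i hi
          rcases Nat.lt_or_ge i n with hlt | hge
          · rw [if_neg (by omega), hagree i hlt] at this; exact this
          · have hin : i = n := by omega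
            subst hin
            rw [if_pos rfl] at this
            simp only [hs', if_pos rfl] at this
            cases hfi : f i <;> rw [hfi] at this <;> cases hsi : s i <;>
              rw [hsi] at this <;> simp_all
        · intro h i hi
          have := h i hi
          rcases Nat.lt_or_ge i n with hlt | hge
          · rw [if_neg (by omega), hagree i hlt]; exact this
          · have hin : i = n := by omega
            subst hin
            rw [if_pos rfl]
            simp only [hs', if_pos rfl]
            rw [this]
      have hmeas : ∀ t : ℕ → Bool, MeasurableSet (A ∩ cyl (n+1) t) :=
        fun t => hA.inter (measurableSet_cyl (n+1) t)
      have heq : mu (A ∩ cyl (n+1) s) = mu (A ∩ cyl (n+1) s') := by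
        conv_rhs => rw [← mu_map_flp n]
        rw [Measure.map_apply (measurable_flp n) (hmeas s'), hpre]
      have hsum : mu (A ∩ cyl n s) = 2 * mu (A ∩ cyl (n+1) s) := by
        rw [hsplit, measure_union hdisj (hmeas s'), ← heq, two_mul]
      have h2 : mu (A ∩ cyl (n+1) s) = 2⁻¹ * (2 * mu (A ∩ cyl (n+1) s)) := by
        rw [← mul_assoc, ENNReal.inv_mul_cancel two_ne_zero (by norm_num), one_mul]
      rw [h2, ← hsum, ih s, pow_succ]
      ring

lemma zero_or_one (A : Set (ℕ → Bool)) (hA : MeasurableSet A)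
    (hinv : ∀ k f, flp k f ∈ A ↔ f ∈ A) : mu A = 0 ∨ mu A = 1 := by
  have hfin : IsFiniteMeasure (mu A • mu) := by
    constructor
    rw [Measure.smul_apply, smul_eq_mul, measure_univ, mul_one]
    exact lt_of_le_of_lt prob_le_one ENNReal.one_lt_top
  have hres : mu.restrict A = mu A • mu := by
    refine ext_of_generate_finite Cyls gen_Cyls isPiSystem_Cyls ?_ ?_
    · rintro B ⟨n, t, rfl⟩
      rw [Measure.restrict_apply (measurableSet_cyl n t), inter_comm,
        mu_inter_cyl A hA hinv n t, Measure.smul_apply, smul_eq_mul, mu_cyl]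
    · rw [Measure.restrict_apply_univ, Measure.smul_apply, smul_eq_mul,
        measure_univ, mul_one]
  have hkey : mu A = mu A * mu A := by
    have h1 : mu.restrict A A = mu A := by
      rw [Measure.restrict_apply hA, inter_self]
    rw [hres, Measure.smul_apply, smul_eq_mul] at h1
    exact h1.symm
  by_cases h0 : mu A = 0
  · exact Or.inl h0
  · refine Or.inr ?_
    have hne : mu A ≠ ⊤ := measure_ne_top mu A
    have h1 : (mu A)⁻¹ * mu A = (mu A)⁻¹ * (mu A * mu A) := by rw [← hkey]
    rw [← mul_assoc, ENNReal.inv_mul_cancel h0 hne, one_mul] at h1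
    exact h1.symm

lemma mu_singleton_eq_zero (g : ℕ → Bool) : mu {g} = 0 := by
  have hle : ∀ n : ℕ, mu {g} ≤ 2⁻¹ ^ n := by
    intro n
    rw [← mu_cyl n g]
    refine measure_mono ?_
    rintro f rfl
    exact fun i _ => rfl
  have h0 : mu {g} ≤ 0 :=
    ge_of_tendsto'
      (ENNReal.tendsto_pow_atTop_nhds_zero_of_lt_one
        (by norm_num : (2⁻¹ : ℝ≥0∞) < 1)) hle
  exact le_antisymm h0 zero_le

end

end E0NotSmooth


open E0NotSmooth in
theorem E0_not_smooth :
    ¬ ∃ S : (ℕ → Bool) → ℝ, Measurable S ∧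
      ∀ f g : ℕ → Bool, E0 f g ↔ S f = S g := by
  rintro ⟨S, hS, hiff⟩
  have hSflp : ∀ (k : ℕ) (f : ℕ → Bool), S (flp k f) = S f := by
    intro k f
    refine (hiff _ _).1 ⟨k + 1, fun n hn => ?_⟩
    simp only [flp]
    rw [if_neg (by omega)]
  -- invariant preimages have measure 0 or 1
  have hzo : ∀ B : Set ℝ, MeasurableSet B → mu (S ⁻¹' B) = 0 ∨ mu (S ⁻¹' B) = 1 := by
    intro B hB
    refine zero_or_one _ (hS hB) fun k f => ?_
    simp only [mem_preimage, hSflp]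
  set g : ℝ → ℝ≥0∞ := fun t => mu (S ⁻¹' Iic t) with hg
  have h01 : ∀ t, g t = 0 ∨ g t = 1 := fun t => hzo _ measurableSet_Iic
  have gmono : ∀ {t t' : ℝ}, t ≤ t' → g t ≤ g t' := fun h =>
    measure_mono (preimage_mono (Iic_subset_Iic.2 h))
  -- there is some a with g a = 1
  have hex1 : ∃ a : ℕ, g a = 1 := by
    by_contra h
    push_neg at h
    have h0 : ∀ a : ℕ, g a = 0 := fun a => (h01 a).resolve_right (h a)
    have huniv : (univ : Set (ℕ → Bool)) = ⋃ a : ℕ, S ⁻¹' Iic a := by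
      ext f
      simp only [mem_univ, true_iff, mem_iUnion, mem_preimage, mem_Iic]
      obtain ⟨a, ha⟩ := exists_nat_ge (S f)
      exact ⟨a, ha⟩
    have := measure_iUnion_null (fun a : ℕ => h0 a)
    rw [← huniv, measure_univ] at this
    exact one_ne_zero this
  have hex0 : ∃ b : ℕ, g (-(b : ℝ)) = 0 := by
    by_contra h
    push_neg at h
    have h1 : ∀ b : ℕ, g (-(b : ℝ)) = 1 := fun b => (h01 _).resolve_left (h b)
    have hc : ∀ b : ℕ, mu ((S ⁻¹' Iic (-(b : ℝ)))ᶜ) = 0 := by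
      intro b
      have hgb : mu (S ⁻¹' Iic (-(b : ℝ))) = 1 := h1 b
      rw [measure_compl (hS measurableSet_Iic) (measure_ne_top mu _), measure_univ, hgb,
        tsub_self]
    have huniv : (univ : Set (ℕ → Bool)) = ⋃ b : ℕ, (S ⁻¹' Iic (-(b : ℝ)))ᶜ := by
      ext f
      simp only [mem_univ, true_iff, mem_iUnion, mem_compl_iff, mem_preimage, mem_Iic, not_le]
      obtain ⟨b, hb⟩ := exists_nat_gt (-(S f))
      exact ⟨b, by linarith⟩
    have := measure_iUnion_null hc
    rw [← huniv, measure_univ] at this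
    exact one_ne_zero this
  obtain ⟨a, ha⟩ := hex1
  obtain ⟨b, hb⟩ := hex0
  set G : Set ℝ := {t | g t = 1} with hG
  have hGne : G.Nonempty := ⟨a, ha⟩
  have hGbdd : BddBelow G := by
    refine ⟨-(b : ℝ), fun t ht => ?_⟩
    by_contra hlt
    push_neg at hlt
    have h2 : g t ≤ g (-(b : ℝ)) := gmono hlt.le
    rw [hb] at h2
    rw [hG, mem_setOf_eq] at ht
    rw [ht] at h2
    simp at h2
  set r : ℝ := sInf G with hr
  have h_gt : ∀ t, r < t → g t = 1 := by
    intro t ht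
    obtain ⟨t', ht'G, ht'⟩ := exists_lt_of_csInf_lt hGne ht
    refine le_antisymm prob_le_one ?_
    calc (1 : ℝ≥0∞) = g t' := ht'G.symm
    _ ≤ g t := gmono ht'.le
  have h_lt : ∀ t, t < r → g t = 0 := by
    intro t ht
    refine (h01 t).resolve_right fun h1 => ?_
    exact absurd (csInf_le hGbdd h1) (not_le.2 ht)
  -- preimage of Ioi t is null for t > r
  have hIoi : ∀ t, r < t → mu (S ⁻¹' Ioi t) = 0 := by
    intro t ht
    have hcompl : S ⁻¹' Ioi t = (S ⁻¹' Iic t)ᶜ := by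
      rw [← preimage_compl, compl_Iic]
    have hgt : mu (S ⁻¹' Iic t) = 1 := h_gt t ht
    rw [hcompl, measure_compl (hS measurableSet_Iic) (measure_ne_top mu _), measure_univ,
      hgt, tsub_self]
  have hIoi_r : mu (S ⁻¹' Ioi r) = 0 := by
    have hsub : S ⁻¹' Ioi r = ⋃ n : ℕ, S ⁻¹' Ioi (r + 1 / (n + 1)) := by
      ext f
      simp only [mem_preimage, mem_Ioi, mem_iUnion]
      constructor
      · intro hf
        obtain ⟨n, hn⟩ := exists_nat_one_div_lt (sub_pos.2 hf)
        exact ⟨n, by push_cast at hn ⊢; linarith⟩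
      · rintro ⟨n, hn⟩
        have : (0 : ℝ) < 1 / (n + 1) := by positivity
        linarith
    rw [hsub]
    exact measure_iUnion_null fun n =>
      hIoi _ (by nlinarith [div_pos one_pos (by positivity : (0:ℝ) < (n : ℝ) + 1)])
  have hgr : g r = 1 := by
    have hcompl : (S ⁻¹' Iic r)ᶜ = S ⁻¹' Ioi r := by
      rw [← preimage_compl, compl_Iic]
    refine le_antisymm prob_le_one ?_
    have h1 : (1 : ℝ≥0∞) = mu ((S ⁻¹' Iic r) ∪ (S ⁻¹' Iic r)ᶜ) := by
      rw [union_compl_self, measure_univ]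
    rw [h1]
    calc mu ((S ⁻¹' Iic r) ∪ (S ⁻¹' Iic r)ᶜ)
        ≤ mu (S ⁻¹' Iic r) + mu ((S ⁻¹' Iic r)ᶜ) := measure_union_le _ _
    _ = mu (S ⁻¹' Iic r) := by rw [hcompl, hIoi_r, add_zero]
  have hIio : mu (S ⁻¹' Iio r) = 0 := by
    have hsub : S ⁻¹' Iio r = ⋃ n : ℕ, S ⁻¹' Iic (r - 1 / (n + 1)) := by
      ext f
      simp only [mem_preimage, mem_Iio, mem_iUnion, mem_Iic]
      constructor
      · intro hf
        obtain ⟨n, hn⟩ := exists_nat_one_div_lt (sub_pos.2 hf)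
        exact ⟨n, by push_cast at hn ⊢; linarith⟩
      · rintro ⟨n, hn⟩
        have : (0 : ℝ) < 1 / ((n : ℝ) + 1) := by positivity
        linarith
    rw [hsub]
    exact measure_iUnion_null fun n =>
      h_lt _ (by nlinarith [div_pos one_pos (by positivity : (0:ℝ) < (n : ℝ) + 1)])
  -- the fiber over r has measure 1 ≥ 1 > 0
  have hfiber : (1 : ℝ≥0∞) ≤ mu (S ⁻¹' {r}) := by
    have hsub : S ⁻¹' Iic r ⊆ S ⁻¹' {r} ∪ S ⁻¹' Iio r := by
      intro f hf
      rcases eq_or_lt_of_le (show S f ≤ r from hf) with h | h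
      · exact Or.inl h
      · exact Or.inr h
    calc (1 : ℝ≥0∞) = g r := hgr.symm
    _ ≤ mu (S ⁻¹' {r} ∪ S ⁻¹' Iio r) := measure_mono hsub
    _ ≤ mu (S ⁻¹' {r}) + mu (S ⁻¹' Iio r) := measure_union_le _ _
    _ = mu (S ⁻¹' {r}) := by rw [hIio, add_zero]
  obtain ⟨f0, hf0⟩ := nonempty_of_measure_ne_zero
    (show mu (S ⁻¹' {r}) ≠ 0 by intro h; rw [h] at hfiber; simp at hfiber)
  -- the fiber is a single E0-class, which is countable, hence null
  have hsubclass : S ⁻¹' {r} ⊆ {h | E0 h f0} := by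
    intro h hh
    refine (hiff h f0).2 ?_
    rw [mem_preimage, mem_singleton_iff] at hh hf0
    rw [hh, hf0]
  have hclass_cnt : {h | E0 h f0}.Countable := by
    have hcl : {h | E0 h f0} = ⋃ N : ℕ, {h : ℕ → Bool | ∀ n, N ≤ n → h n = f0 n} := by
      ext h
      simp only [E0, mem_setOf_eq, mem_iUnion]
    rw [hcl]
    refine countable_iUnion fun N => Set.Finite.countable ?_
    have hsub2 : {h : ℕ → Bool | ∀ n, N ≤ n → h n = f0 n} ⊆
        range (fun v : Fin N → Bool => fun n => if hn : n < N then v ⟨n, hn⟩ else f0 n) := by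
      intro h hh
      refine ⟨fun i => h i, ?_⟩
      ext n
      by_cases hn : n < N
      · simp [hn]
      · simp only [dif_neg hn]
        exact (hh n (by omega)).symm
    exact (finite_range _).subset hsub2
  have hclass0 : mu {h | E0 h f0} = 0 := by
    rw [← biUnion_of_singleton {h | E0 h f0}]
    rw [measure_biUnion_null_iff hclass_cnt]
    exact fun h _ => mu_singleton_eq_zero h
  have : (1 : ℝ≥0∞) ≤ 0 :=
    le_trans hfiber (le_trans (measure_mono hsubclass) hclass0.le)
  simp at this
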